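/- The matrix Γ indexed by subsets of [n-1] with entries Γ_{ST} = #{w ∈ S_n : C(w) = [n-1]\S and D(w) = T} is invertible over ℚ and its inverse satisfies (Γ^{-1})_{ST} = (-1)^{|S|+|T|} Γ_{ST}. -/

import Mathlib

open Finset

/-- The connectivity set of a word `w` of length `n+1` (0-based indices in `[n-1]` ≅ `Fin n`):
`i ∈ C(w)` iff `w j < w k` whenever `j ≤ i < k`. -/
def Cset {n : ℕ} {α : Type*} [LinearOrder α] (w : Fin (n+1) → α) : Finset (Fin n) :=
  Finset.univ.filter (fun i => ∀ j k : Fin (n+1), (j : ℕ) ≤ (i : ℕ) → (i : ℕ) < (k : ℕ) → w j < w k)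

/-- The descent set of a permutation of `[n]` (modelled on `Fin (n+1)`, 0-based). -/
def Dset {n : ℕ} (w : Equiv.Perm (Fin (n+1))) : Finset (Fin n) :=
  Finset.univ.filter (fun i => w i.succ < w i.castSucc)

/-- The list of gaps `i₁, i₂-i₁, …, n - i_k` determined by `S = {i₁ < … < i_k} ⊆ [n-1]`
(here the ambient set is `[n]` with `n+1` replaced appropriately: sets live in `Fin n`,
permutations act on `n+1` points). -/
def gaps {n : ℕ} (S : Finset (Fin n)) : List ℕ :=
  let l := (S.sort (· ≤ ·)).map (fun i => (i : ℕ) + 1)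
  List.zipWith (fun a b => b - a) (0 :: l) (l ++ [n+1])

/-- `η(S) = i₁!(i₂-i₁)!⋯(n-i_k)!`. -/
def eta {n : ℕ} (S : Finset (Fin n)) : ℕ := ((gaps S).map Nat.factorial).prod

/-- The number of inversions of a permutation. -/
def invNum {m : ℕ} (w : Equiv.Perm (Fin m)) : ℕ :=
  (Finset.univ.filter (fun p : Fin m × Fin m => p.1 < p.2 ∧ w p.2 < w p.1)).card

/-- `z(T)`: sum of binomial coefficients `C(gap, 2)` over the gaps of the complement of `T`. -/
def zstat {n : ℕ} (T : Finset (Fin n)) : ℕ := ((gaps Tᶜ).map (fun a => a.choose 2)).sum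

/-- The `q`-factorial `[j]!_q` in `ℤ[q]`. -/
noncomputable def qFact (j : ℕ) : Polynomial ℤ :=
  ∏ a ∈ Finset.range j, ∑ b ∈ Finset.range (a+1), Polynomial.X ^ b

/-- `η(S, q)`, the `q`-analogue of `η(S)`. -/
noncomputable def etaq {n : ℕ} (S : Finset (Fin n)) : Polynomial ℤ := ((gaps S).map qFact).prod

namespace Stmt9
open Matrix
variable {n : ℕ}



/-- block index of a position relative to cut set A -/
def blk (A : Finset (Fin n)) (x : Fin (n+1)) : ℕ :=
  #(A.filter fun c : Fin n => (c : ℕ) < (x : ℕ))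

lemma blk_mono {A : Finset (Fin n)} {x y : Fin (n+1)} (h : (x:ℕ) ≤ (y:ℕ)) :
    blk A x ≤ blk A y := by
  apply Finset.card_le_card
  intro c hc
  simp only [mem_filter] at hc ⊢
  exact ⟨hc.1, lt_of_lt_of_le hc.2 h⟩

lemma blk_lt {A : Finset (Fin n)} {i : Fin n} {x y : Fin (n+1)}
    (hi : i ∈ A) (hx : (x:ℕ) ≤ (i:ℕ)) (hy : (i:ℕ) < (y:ℕ)) :
    blk A x < blk A y := by
  apply Finset.card_lt_card
  constructor
  · intro c hc
    simp only [mem_filter] at hc ⊢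
    exact ⟨hc.1, by omega⟩
  · intro hsub
    have hmem : i ∈ A.filter fun c : Fin n => (c:ℕ) < (y:ℕ) := by
      simp only [mem_filter]; exact ⟨hi, hy⟩
    have := hsub hmem
    simp only [mem_filter] at this
    omega

lemma mem_Cset {v : Fin (n+1) → Fin (n+1)} {i : Fin n} :
    i ∈ Cset v ↔ ∀ j k : Fin (n+1), (j : ℕ) ≤ (i : ℕ) → (i : ℕ) < (k : ℕ) → v j < v k := by
  simp [Cset]

/-- pigeonhole core -/
lemma pigeon (v : Equiv.Perm (Fin (n+1))) (c : ℕ)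
    (hc : ∀ j k : Fin (n+1), (j : ℕ) ≤ c → c < (k : ℕ) → v j < v k) (x : Fin (n+1)) :
    ((v x : ℕ) ≤ c ↔ (x : ℕ) ≤ c) := by
  have dir1 : ∀ y : Fin (n+1), (v y : ℕ) ≤ c → (y : ℕ) ≤ c := by
    intro y hy
    by_contra hgt
    push_neg at hgt
    -- all j with j ≤ c map below v y
    set T1 : Finset (Fin (n+1)) := univ.filter (fun z => (z:ℕ) ≤ c) with hT1
    set S1 : Finset (Fin (n+1)) := insert y T1 with hS1
    have hyT1 : y ∉ T1 := by simp [hT1]; omega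
    have hcard : S1.card = T1.card + 1 := Finset.card_insert_of_notMem hyT1
    have himg : S1.image v ⊆ T1 := by
      intro z hz
      simp only [hS1, Finset.mem_image, Finset.mem_insert] at hz
      obtain ⟨a, ha, rfl⟩ := hz
      rcases ha with rfl | ha
      · simp [hT1]; exact hy
      · simp only [hT1, mem_filter, mem_univ, true_and] at ha ⊢
        have := hc a y ha (by omega)
        have hlt : (v a : ℕ) < (v y : ℕ) := this
        omega
    have hinj := Finset.card_image_of_injective S1 v.injective
    have := Finset.card_le_card himg
    omega
  constructor
  · exact dir1 x
  · intro hx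
    set T1 : Finset (Fin (n+1)) := univ.filter (fun z => (z:ℕ) ≤ c) with hT1
    set Pre : Finset (Fin (n+1)) := univ.filter (fun z => ((v z :ℕ)) ≤ c) with hPre
    have hsub : Pre ⊆ T1 := by
      intro z hz
      simp only [hPre, hT1, mem_filter, mem_univ, true_and] at hz ⊢
      exact dir1 z hz
    have himg : Pre.image v = T1 := by
      apply Finset.Subset.antisymm
      · intro z hz
        simp only [Finset.mem_image, hPre, mem_filter, mem_univ, true_and] at hz
        obtain ⟨a, ha, rfl⟩ := hz
        simp only [hT1, mem_filter, mem_univ, true_and]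
        exact ha
      · intro z hz
        simp only [hT1, mem_filter, mem_univ, true_and] at hz
        simp only [Finset.mem_image, hPre, mem_filter, mem_univ, true_and]
        refine ⟨v.symm z, ?_, by simp⟩
        simpa using hz
    have hcard : Pre.card = T1.card := by
      rw [← himg, Finset.card_image_of_injective _ v.injective]
    have : Pre = T1 := Finset.eq_of_subset_of_card_le hsub (le_of_eq hcard.symm)
    have hx1 : x ∈ T1 := by simp [hT1]; exact hx
    rw [← this] at hx1
    simpa [hPre] using hx1

/-- characterization of C(v) ⊇ A via blk invariance -/
lemma subset_Cset_iff_blk {v : Equiv.Perm (Fin (n+1))} {A : Finset (Fin n)} :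
    A ⊆ Cset ⇑v ↔ ∀ x, blk A (v x) = blk A x := by
  constructor
  · intro h x
    unfold blk
    congr 1
    apply Finset.filter_congr
    intro c hcA
    have hc := mem_Cset.mp (h hcA)
    have := pigeon v (c : ℕ) hc x
    omega
  · intro h i hi
    rw [mem_Cset]
    intro j k hj hk
    have h1 : (v j : ℕ) ≤ (i : ℕ) := by
      by_contra hgt
      push_neg at hgt
      have := blk_lt hi hj hgt (A := A)
      rw [h j] at this
      omega
    have h2 : (i : ℕ) < (v k : ℕ) := by
      by_contra hle
      push_neg at hle
      have := blk_lt hi hle hk (A := A)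
      rw [h k] at this
      omega
    rw [Fin.lt_def]
    omega



/-- increasing within blocks -/
def IncrOn (A : Finset (Fin n)) (w : Equiv.Perm (Fin (n+1))) : Prop :=
  ∀ x y : Fin (n+1), (x:ℕ) < (y:ℕ) → blk A x = blk A y → w x < w y

lemma blk_adj {A : Finset (Fin n)} {i : Fin n} (hiA : i ∉ A) :
    blk A i.castSucc = blk A i.succ := by
  unfold blk
  congr 1
  apply Finset.filter_congr
  intro c hc
  have hne : (c : ℕ) ≠ (i : ℕ) := by
    intro h
    exact hiA (Fin.val_inj.mp h ▸ hc)
  simp only [Fin.coe_castSucc, Fin.val_succ]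
  constructor <;> intro <;> omega

lemma incrOn_of {B T : Finset (Fin n)} {w : Equiv.Perm (Fin (n+1))}
    (hB : B ⊆ Cset ⇑w) (hD : Dset w ⊆ T) : IncrOn (B ∪ T) w := by
  set A := B ∪ T with hA
  have adj : ∀ x y : Fin (n+1), (y:ℕ) = (x:ℕ) + 1 → blk A x = blk A y → w x < w y := by
    intro x y hxy hblk
    have hxn : (x:ℕ) < n := by omega
    set i : Fin n := ⟨(x:ℕ), hxn⟩ with hi
    have hxc : x = i.castSucc := by apply Fin.ext; simp [hi]
    have hyc : y = i.succ := by apply Fin.ext; simp [hi, hxy]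
    have hiA : i ∉ A := by
      intro hmem
      have := blk_lt (x := x) (y := y) hmem (by simp [hi]) (by simp [hi]; omega)
      omega
    have hiT : i ∉ T := fun h => hiA (by simp [hA, h])
    have hiD : i ∉ Dset w := fun h => hiT (hD h)
    have hle : ¬ (w i.succ < w i.castSucc) := by
      intro hlt
      exact hiD (by simp [Dset, hlt])
    have hne : w i.castSucc ≠ w i.succ := by
      intro h
      exact absurd (w.injective h) (Fin.castSucc_lt_succ : i.castSucc < i.succ).ne
    rw [hxc, hyc]
    exact lt_of_le_of_ne (not_lt.mp hle) hne
  intro x y hxy hblk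
  obtain ⟨d, hd⟩ : ∃ d, (y:ℕ) = (x:ℕ) + d + 1 := ⟨(y:ℕ) - (x:ℕ) - 1, by omega⟩
  clear hxy
  induction d generalizing y with
  | zero => exact adj x y (by omega) hblk
  | succ d ih =>
    have hzn : (x:ℕ) + d + 1 < n + 1 := by have := y.isLt; omega
    set z : Fin (n+1) := ⟨(x:ℕ) + d + 1, hzn⟩ with hz
    have h1 : blk A x ≤ blk A z := blk_mono (by simp [hz]; omega)
    have h2 : blk A z ≤ blk A y := blk_mono (by simp [hz]; omega)
    have hbz : blk A x = blk A z := by omega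
    exact lt_trans (ih z hbz (by simp [hz])) (adj z y (by simp [hz]; omega) (by omega))

lemma dset_sub_of_incr {B T : Finset (Fin n)} {w : Equiv.Perm (Fin (n+1))}
    (hB : B ⊆ Cset ⇑w) (hIncr : IncrOn (B ∪ T) w) : Dset w ⊆ T := by
  intro i hi
  simp only [Dset, mem_filter, mem_univ, true_and] at hi
  by_contra hiT
  by_cases hiB : i ∈ B
  · have := mem_Cset.mp (hB hiB) i.castSucc i.succ (by simp) (by simp)
    exact absurd hi (asymm this)
  · have hiA : i ∉ B ∪ T := by simp [hiB, hiT]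
    have := hIncr i.castSucc i.succ (by simp) (blk_adj hiA)
    exact absurd hi (asymm this)

/-- sorting key -/
def sortKey (A : Finset (Fin n)) (u : Equiv.Perm (Fin (n+1))) (x : Fin (n+1)) : ℕ :=
  (u x : ℕ) + blk A x * (n + 1)

lemma sortKey_div (A : Finset (Fin n)) (u : Equiv.Perm (Fin (n+1))) (x : Fin (n+1)) :
    sortKey A u x / (n+1) = blk A x := by
  unfold sortKey
  rw [Nat.add_mul_div_right _ _ (Nat.succ_pos n), Nat.div_eq_of_lt (u x).isLt]
  omega

lemma sortKey_inj (A : Finset (Fin n)) (u : Equiv.Perm (Fin (n+1))) :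
    Function.Injective (sortKey A u) := by
  intro x y h
  have hd := congrArg (· / (n+1)) h
  simp only [sortKey_div] at hd
  have : (u x : ℕ) = (u y : ℕ) := by
    unfold sortKey at h
    rw [hd] at h
    omega
  exact u.injective (Fin.val_inj.mp this)

def Good (A : Finset (Fin n)) (u : Equiv.Perm (Fin (n+1))) (σ : Equiv.Perm (Fin (n+1))) : Prop :=
  (∀ x, blk A (σ x) = blk A x) ∧
  ∀ x y : Fin (n+1), (x:ℕ) < (y:ℕ) → blk A x = blk A y → u (σ x) < u (σ y)

lemma good_sort (A : Finset (Fin n)) (u : Equiv.Perm (Fin (n+1))) :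
    Good A u (Tuple.sort (sortKey A u)) := by
  set f := sortKey A u with hf
  set σ := Tuple.sort f with hσ
  have hmono : Monotone (f ∘ σ) := Tuple.monotone_sort f
  have hsm : StrictMono (f ∘ σ) :=
    hmono.strictMono_of_injective ((sortKey_inj A u).comp σ.injective)
  have hblk : ∀ x, blk A (σ x) = blk A x := by
    have h1 : Monotone (blk A ∘ ⇑σ) := by
      intro x y hxy
      simp only [Function.comp_apply]
      rw [← sortKey_div A u, ← sortKey_div A u]
      exact Nat.div_le_div_right (hmono hxy)
    have h2 : Monotone (blk A ∘ ⇑(1 : Equiv.Perm (Fin (n+1)))) := by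
      intro x y hxy
      simp only [Function.comp_apply, Equiv.Perm.one_apply]
      exact blk_mono (Fin.le_def.mp hxy)
    have := Tuple.unique_monotone h1 h2
    intro x
    have hx := congrFun this x
    simpa using hx
  refine ⟨hblk, ?_⟩
  intro x y hxy hbxy
  have hlt : f (σ x) < f (σ y) := hsm (Fin.lt_def.mpr hxy)
  have hb : blk A (σ x) = blk A (σ y) := by rw [hblk, hblk, hbxy]
  rw [hf] at hlt
  unfold sortKey at hlt
  rw [hb] at hlt
  have : (u (σ x) : ℕ) < (u (σ y) : ℕ) := by omega
  exact Fin.lt_def.mpr this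

lemma good_unique {A : Finset (Fin n)} {u σ : Equiv.Perm (Fin (n+1))}
    (h : Good A u σ) : σ = Tuple.sort (sortKey A u) := by
  set f := sortKey A u with hf
  rw [Tuple.eq_sort_iff]
  constructor
  · intro x y hxy
    rcases eq_or_lt_of_le hxy with rfl | hlt
    · exact le_refl _
    · have hc : (x:ℕ) < (y:ℕ) := Fin.lt_def.mp hlt
      have hbm : blk A x ≤ blk A y := blk_mono (le_of_lt hc)
      simp only [Function.comp_apply]
      rw [hf]
      unfold sortKey
      rw [h.1 x, h.1 y]
      rcases eq_or_lt_of_le hbm with hbe | hblt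
      · have := h.2 x y hc hbe
        have h3 : (u (σ x) : ℕ) < (u (σ y) : ℕ) := Fin.lt_def.mp this
        rw [hbe]
        omega
      · have h4 : (u (σ x) : ℕ) < n + 1 := (u (σ x)).isLt
        have h5 : blk A x * (n+1) + (n+1) ≤ blk A y * (n+1) := by
          rw [← add_one_mul]
          exact Nat.mul_le_mul_right _ hblt
        omega
  · intro i j hij hfe
    exact absurd (σ.injective (sortKey_inj A u hfe)) (ne_of_lt hij)

lemma key_card (B T : Finset (Fin n)) :
    #(univ.filter (fun w : Equiv.Perm (Fin (n+1)) => B ⊆ Cset ⇑w ∧ Dset w ⊆ T)) *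
      #(univ.filter (fun v : Equiv.Perm (Fin (n+1)) => B ∪ T ⊆ Cset ⇑v)) =
      #(univ.filter (fun u : Equiv.Perm (Fin (n+1)) => B ⊆ Cset ⇑u)) := by
  rw [← Finset.card_product]
  apply Finset.card_bij (fun p _ => p.1 * p.2)
  · -- maps into target
    rintro ⟨w, v⟩ hp
    simp only [Finset.mem_product, mem_filter, mem_univ, true_and] at hp
    obtain ⟨⟨hwB, hwD⟩, hvA⟩ := hp
    simp only [mem_filter, mem_univ, true_and]
    have hvB : B ⊆ Cset ⇑v := subset_trans subset_union_left hvA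
    rw [subset_Cset_iff_blk] at hvB hwB ⊢
    intro x
    simp only [Equiv.Perm.mul_apply]
    rw [hwB, hvB]
  · -- injectivity
    rintro ⟨w1, v1⟩ hp1 ⟨w2, v2⟩ hp2 heq
    simp only [Finset.mem_product, mem_filter, mem_univ, true_and] at hp1 hp2
    obtain ⟨⟨hw1B, hw1D⟩, hv1A⟩ := hp1
    obtain ⟨⟨hw2B, hw2D⟩, hv2A⟩ := hp2
    simp only at heq
    set A := B ∪ T with hA
    set u := w1 * v1 with hu
    have good1 : Good A u v1⁻¹ := by
      constructor
      · intro x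
        have h := (subset_Cset_iff_blk.mp hv1A) (v1⁻¹ x)
        rw [show v1 (v1⁻¹ x) = x from Equiv.apply_symm_apply v1 x] at h
        exact h.symm
      · intro x y hxy hblk
        have e1 : u (v1⁻¹ x) = w1 x := by
          simp [hu, Equiv.Perm.mul_apply]
        have e2 : u (v1⁻¹ y) = w1 y := by
          simp [hu, Equiv.Perm.mul_apply]
        rw [e1, e2]
        exact incrOn_of hw1B hw1D x y hxy hblk
    have good2 : Good A u v2⁻¹ := by
      constructor
      · intro x
        have h := (subset_Cset_iff_blk.mp hv2A) (v2⁻¹ x)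
        rw [show v2 (v2⁻¹ x) = x from Equiv.apply_symm_apply v2 x] at h
        exact h.symm
      · intro x y hxy hblk
        have e1 : u (v2⁻¹ x) = w2 x := by
          rw [heq]
          simp [Equiv.Perm.mul_apply]
        have e2 : u (v2⁻¹ y) = w2 y := by
          rw [heq]
          simp [Equiv.Perm.mul_apply]
        rw [e1, e2]
        exact incrOn_of hw2B hw2D x y hxy hblk
    have hv : v1⁻¹ = v2⁻¹ := (good_unique good1).trans (good_unique good2).symm
    have hv' : v1 = v2 := inv_injective hv
    have hw : w1 = w2 := by
      have heq' : w1 * v1 = w2 * v2 := hu.symm.trans heq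
      rw [hv'] at heq'
      exact mul_right_cancel heq'
    rw [hw, hv']
  · -- surjectivity
    intro u hu
    simp only [mem_filter, mem_univ, true_and] at hu
    set A := B ∪ T with hA
    set σ := Tuple.sort (sortKey A u) with hσ
    have hGood : Good A u σ := good_sort A u
    have hσC : A ⊆ Cset ⇑σ := subset_Cset_iff_blk.mpr hGood.1
    have hBC : B ⊆ Cset ⇑(u * σ) := by
      rw [subset_Cset_iff_blk]
      intro x
      simp only [Equiv.Perm.mul_apply]
      rw [(subset_Cset_iff_blk.mp hu) (σ x),
        (subset_Cset_iff_blk.mp (subset_trans subset_union_left hσC)) x]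
    have hInc : IncrOn A (u * σ) := by
      intro x y hxy hblk
      simp only [Equiv.Perm.mul_apply]
      exact hGood.2 x y hxy hblk
    refine ⟨(u * σ, σ⁻¹), ?_, ?_⟩
    · simp only [Finset.mem_product, mem_filter, mem_univ, true_and]
      refine ⟨⟨hBC, dset_sub_of_incr hBC hInc⟩, ?_⟩
      rw [subset_Cset_iff_blk]
      intro x
      have h := hGood.1 (σ⁻¹ x)
      rw [show σ (σ⁻¹ x) = x from Equiv.apply_symm_apply σ x] at h
      exact h.symm
    · simp only
      exact mul_inv_cancel_right u σ


lemma csc {A B : Finset (Fin n)} : Aᶜ ⊆ B ↔ Bᶜ ⊆ A := by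
  constructor <;>
  · intro h x hx
    by_contra hxA
    exact (Finset.mem_compl.mp hx) (h (Finset.mem_compl.mpr hxA))

lemma Dset_rev (w : Equiv.Perm (Fin (n+1))) :
    Dset (Fin.revPerm * w) = (Dset w)ᶜ := by
  ext i
  have hne : w i.castSucc ≠ w i.succ :=
    fun h => absurd (w.injective h) (ne_of_lt (Fin.castSucc_lt_succ : i.castSucc < i.succ))
  simp only [Dset, mem_filter, mem_univ, true_and, mem_compl, Equiv.Perm.mul_apply,
    Fin.revPerm_apply, Fin.rev_lt_rev, not_lt]
  constructor
  · intro h; exact le_of_lt h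
  · intro h; exact lt_of_le_of_ne h hne

lemma card_rev (A : Finset (Fin n)) :
    #(univ.filter fun w : Equiv.Perm (Fin (n+1)) => Aᶜ ⊆ Dset w)
      = #(univ.filter fun w : Equiv.Perm (Fin (n+1)) => Dset w ⊆ A) := by
  have hrr : Fin.revPerm * Fin.revPerm = (1 : Equiv.Perm (Fin (n+1))) := by
    ext x
    simp [Equiv.Perm.mul_apply]
  apply Finset.card_bij (fun w _ => Fin.revPerm * w)
  · intro w hw
    simp only [mem_filter, mem_univ, true_and] at hw ⊢
    rw [Dset_rev]
    exact csc.mp hw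
  · intro w1 h1 w2 h2 heq
    exact mul_left_cancel heq
  · intro u hu
    simp only [mem_filter, mem_univ, true_and] at hu
    refine ⟨Fin.revPerm * u, ?_, by rw [← mul_assoc, hrr, one_mul]⟩
    simp only [mem_filter, mem_univ, true_and]
    rw [Dset_rev]
    intro x hx
    rw [Finset.mem_compl]
    intro hxd
    exact (Finset.mem_compl.mp hx) (hu hxd)

lemma Cset_one : Cset ⇑(1 : Equiv.Perm (Fin (n+1))) = (univ : Finset (Fin n)) := by
  ext i
  simp only [Cset, mem_filter, mem_univ, true_and, iff_true]
  intro j k hj hk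
  simp only [Equiv.Perm.one_apply]
  exact Fin.lt_def.mpr (by omega)

lemma e_pos (A : Finset (Fin n)) :
    0 < #(univ.filter fun v : Equiv.Perm (Fin (n+1)) => A ⊆ Cset ⇑v) := by
  apply Finset.card_pos.mpr
  refine ⟨1, ?_⟩
  simp only [mem_filter, mem_univ, true_and]
  rw [Cset_one]
  exact subset_univ A

lemma cardPart (S T : Finset (Fin n)) :
    #(univ.filter (fun w : Equiv.Perm (Fin (n+1)) => Sᶜ ⊆ Cset ⇑w ∧ Dset w ⊆ T))
      = ∑ p : Finset (Fin n) × Finset (Fin n),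
          if p.1 ⊆ S ∧ p.2 ⊆ T then
            #(univ.filter (fun w : Equiv.Perm (Fin (n+1)) => Cset ⇑w = p.1ᶜ ∧ Dset w = p.2))
          else 0 := by
  rw [Finset.card_eq_sum_card_fiberwise
    (f := fun w : Equiv.Perm (Fin (n+1)) => ((Cset ⇑w)ᶜ, Dset w))
    (t := univ) (fun x _ => mem_univ _)]
  apply Finset.sum_congr rfl
  intro p _
  by_cases hp : p.1 ⊆ S ∧ p.2 ⊆ T
  · rw [if_pos hp]
    congr 1
    ext w
    simp only [mem_filter, mem_univ, true_and, Prod.ext_iff]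
    constructor
    · rintro ⟨⟨h1, h2⟩, h3, h4⟩
      exact ⟨by rw [← h3, compl_compl], h4⟩
    · rintro ⟨h1, h2⟩
      refine ⟨⟨?_, ?_⟩, ?_, h2⟩
      · rw [h1]
        exact compl_subset_compl.mpr hp.1
      · rw [h2]; exact hp.2
      · rw [h1, compl_compl]
  · rw [if_neg hp]
    rw [Finset.card_eq_zero]
    ext w
    simp only [mem_filter, mem_univ, true_and, Prod.ext_iff, Finset.notMem_empty, iff_false]
    rintro ⟨⟨h1, h2⟩, h3, h4⟩
    apply hp
    constructor
    · rw [← h3]; exact csc.mp h1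
    · rw [← h4]; exact h2



lemma altPow (V : Finset (Fin n)) :
    ∑ C ∈ V.powerset, (-1:ℚ)^C.card = if V = ∅ then 1 else 0 := by
  have h := Finset.sum_powerset_neg_one_pow_card (x := V)
  have h2 : ((∑ m ∈ V.powerset, (-1 : ℤ) ^ m.card : ℤ) : ℚ)
      = ∑ C ∈ V.powerset, (-1:ℚ)^C.card := by push_cast; ring_nf
  rw [← h2, h]
  split <;> norm_num

lemma altInterval (U S : Finset (Fin n)) :
    ∑ T ∈ univ.filter (fun T : Finset (Fin n) => U ⊆ T ∧ T ⊆ S), (-1:ℚ)^T.card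
      = if S = U then (-1:ℚ)^U.card else 0 := by
  by_cases hUS : U ⊆ S
  · have hbij : ∑ T ∈ univ.filter (fun T : Finset (Fin n) => U ⊆ T ∧ T ⊆ S), (-1:ℚ)^T.card
        = ∑ R ∈ (S \ U).powerset, (-1:ℚ)^(U.card + R.card) := by
      apply Finset.sum_nbij' (fun T => T \ U) (fun R => U ∪ R)
      · intro T hT
        simp only [mem_filter, mem_univ, true_and] at hT
        rw [Finset.mem_powerset]
        exact sdiff_subset_sdiff hT.2 (Finset.Subset.refl U)
      · intro R hR
        rw [Finset.mem_powerset] at hR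
        simp only [mem_filter, mem_univ, true_and]
        constructor
        · exact subset_union_left
        · apply union_subset hUS
          exact subset_trans hR (sdiff_subset)
      · intro T hT
        simp only [mem_filter, mem_univ, true_and] at hT
        exact Finset.union_sdiff_of_subset hT.1
      · intro R hR
        rw [Finset.mem_powerset] at hR
        apply Finset.union_sdiff_cancel_left
        exact Finset.disjoint_of_subset_right hR sdiff_disjoint.symm
      · intro T hT
        simp only [mem_filter, mem_univ, true_and] at hT
        congr 1
        rw [Finset.card_sdiff_of_subset hT.1]
        have := Finset.card_le_card hT.1
        omega
    rw [hbij]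
    have : ∑ R ∈ (S \ U).powerset, (-1:ℚ)^(U.card + R.card)
        = (-1:ℚ)^U.card * ∑ R ∈ (S \ U).powerset, (-1:ℚ)^(R.card) := by
      rw [Finset.mul_sum]
      apply Finset.sum_congr rfl
      intro R _
      rw [pow_add]
    rw [this, altPow]
    have hiff : S \ U = ∅ ↔ S = U := by
      rw [Finset.sdiff_eq_empty_iff_subset]
      constructor
      · intro h; exact Finset.Subset.antisymm h hUS
      · intro h; rw [h]
    by_cases hse : S = U
    · rw [if_pos (hiff.mpr hse), if_pos hse, mul_one]
    · rw [if_neg (fun h => hse (hiff.mp h)), if_neg hse, mul_zero]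
  · have hempty : univ.filter (fun T : Finset (Fin n) => U ⊆ T ∧ T ⊆ S) = ∅ := by
      rw [Finset.filter_eq_empty_iff]
      rintro T - ⟨h1, h2⟩
      exact hUS (subset_trans h1 h2)
    rw [hempty, Finset.sum_empty, if_neg ?_]
    intro h
    rw [h] at hUS
    exact hUS (Finset.Subset.refl U)

lemma altSup (K : Finset (Fin n)) :
    ∑ B ∈ univ.filter (fun B : Finset (Fin n) => K ⊆ B), (-1:ℚ)^(Bᶜ.card)
      = if K = univ then 1 else 0 := by
  have hbij : ∑ B ∈ univ.filter (fun B : Finset (Fin n) => K ⊆ B), (-1:ℚ)^(Bᶜ.card)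
      = ∑ C ∈ Kᶜ.powerset, (-1:ℚ)^C.card := by
    apply Finset.sum_nbij' (fun B => Bᶜ) (fun C => Cᶜ)
    · intro B hB
      simp only [mem_filter, mem_univ, true_and] at hB
      rw [Finset.mem_powerset]
      exact compl_subset_compl.mpr hB
    · intro C hC
      rw [Finset.mem_powerset] at hC
      simp only [mem_filter, mem_univ, true_and]
      intro x hx
      rw [Finset.mem_compl]
      intro hxc
      exact (Finset.mem_compl.mp (hC hxc)) hx
    · intro B _; exact compl_compl B
    · intro C _; exact compl_compl C
    · intro B _; rfl
  rw [hbij, altPow]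
  have : Kᶜ = ∅ ↔ K = univ := by
    constructor
    · intro h
      rw [← compl_compl K, h, Finset.compl_empty]
    · intro h; rw [h, Finset.compl_univ]
  by_cases hk : K = univ
  · rw [if_pos (this.mpr hk), if_pos hk]
  · rw [if_neg (fun h => hk (this.mp h)), if_neg hk]



noncomputable def eQ (A : Finset (Fin n)) : ℚ :=
  #(univ.filter fun v : Equiv.Perm (Fin (n+1)) => A ⊆ Cset ⇑v)

noncomputable def bQ (A : Finset (Fin n)) : ℚ :=
  #(univ.filter fun w : Equiv.Perm (Fin (n+1)) => Dset w ⊆ A)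

noncomputable def mQ (S T : Finset (Fin n)) : ℚ :=
  #(univ.filter fun w : Equiv.Perm (Fin (n+1)) => Sᶜ ⊆ Cset ⇑w ∧ Dset w ⊆ T)

lemma eQ_ne (A : Finset (Fin n)) : eQ A ≠ 0 := by
  unfold eQ
  have := e_pos (n := n) A
  positivity

lemma mQ_mul (S T : Finset (Fin n)) : mQ S T * eQ (Sᶜ ∪ T) = eQ Sᶜ := by
  unfold mQ eQ
  rw [← Nat.cast_mul, key_card]

lemma bQ_mul (B : Finset (Fin n)) : bQ B * eQ B = eQ (∅ : Finset (Fin n)) := by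
  have h := key_card (n := n) ∅ B
  have h1 : (univ.filter (fun w : Equiv.Perm (Fin (n+1)) => ∅ ⊆ Cset ⇑w ∧ Dset w ⊆ B))
      = univ.filter (fun w : Equiv.Perm (Fin (n+1)) => Dset w ⊆ B) := by
    apply Finset.filter_congr
    intro w _
    simp
  have h2 : (univ.filter (fun v : Equiv.Perm (Fin (n+1)) => ∅ ∪ B ⊆ Cset ⇑v))
      = univ.filter (fun v : Equiv.Perm (Fin (n+1)) => B ⊆ Cset ⇑v) := by
    apply Finset.filter_congr
    intro v _
    rw [Finset.empty_union]
  have h3 : (univ.filter (fun u : Equiv.Perm (Fin (n+1)) => ∅ ⊆ Cset ⇑u))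
      = (univ.filter (fun v : Equiv.Perm (Fin (n+1)) => (∅ : Finset (Fin n)) ⊆ Cset ⇑v)) := rfl
  rw [h1, h2] at h
  unfold bQ eQ
  rw [← Nat.cast_mul, h]

lemma C5count (A : Finset (Fin n)) :
    ∑ B ∈ univ.filter (fun B : Finset (Fin n) => A ⊆ B), (-1:ℚ)^(Bᶜ.card) * bQ B = bQ A := by
  have hb : ∀ B : Finset (Fin n),
      bQ B = ∑ w : Equiv.Perm (Fin (n+1)), if Dset w ⊆ B then (1:ℚ) else 0 := by
    intro B
    unfold bQ
    rw [Finset.card_filter]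
    push_cast
    apply Finset.sum_congr rfl
    intro w _
    split <;> norm_num
  calc ∑ B ∈ univ.filter (fun B : Finset (Fin n) => A ⊆ B), (-1:ℚ)^(Bᶜ.card) * bQ B
      = ∑ B ∈ univ.filter (fun B : Finset (Fin n) => A ⊆ B),
          ∑ w : Equiv.Perm (Fin (n+1)), (if Dset w ⊆ B then (-1:ℚ)^(Bᶜ.card) else 0) := by
        apply Finset.sum_congr rfl
        intro B _
        rw [hb B, Finset.mul_sum]
        apply Finset.sum_congr rfl
        intro w _
        rw [mul_ite, mul_one, mul_zero]
    _ = ∑ w : Equiv.Perm (Fin (n+1)),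
          ∑ B ∈ univ.filter (fun B : Finset (Fin n) => A ⊆ B),
            (if Dset w ⊆ B then (-1:ℚ)^(Bᶜ.card) else 0) := Finset.sum_comm
    _ = ∑ w : Equiv.Perm (Fin (n+1)),
          (if A ∪ Dset w = univ then (1:ℚ) else 0) := by
        apply Finset.sum_congr rfl
        intro w _
        rw [← Finset.sum_filter, Finset.filter_filter]
        have hpred : univ.filter (fun B : Finset (Fin n) => A ⊆ B ∧ Dset w ⊆ B)
            = univ.filter (fun B : Finset (Fin n) => A ∪ Dset w ⊆ B) := by
          apply Finset.filter_congr
          intro B _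
          rw [Finset.union_subset_iff]
        rw [hpred, altSup]
    _ = bQ A := by
        have h1 : ∀ w : Equiv.Perm (Fin (n+1)), (A ∪ Dset w = univ) ↔ (Aᶜ ⊆ Dset w) := by
          intro w
          constructor
          · intro h x hx
            have : x ∈ A ∪ Dset w := h ▸ mem_univ x
            rcases Finset.mem_union.mp this with h2 | h2
            · exact absurd h2 (Finset.mem_compl.mp hx)
            · exact h2
          · intro h
            apply Finset.eq_univ_of_forall
            intro x
            rw [Finset.mem_union]
            by_cases hx : x ∈ A
            · exact Or.inl hx
            · exact Or.inr (h (Finset.mem_compl.mpr hx))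
        calc ∑ w : Equiv.Perm (Fin (n+1)), (if A ∪ Dset w = univ then (1:ℚ) else 0)
            = ∑ w : Equiv.Perm (Fin (n+1)), (if Aᶜ ⊆ Dset w then (1:ℚ) else 0) := by
              apply Finset.sum_congr rfl
              intro w _
              rw [if_congr (h1 w) rfl rfl]
          _ = #(univ.filter fun w : Equiv.Perm (Fin (n+1)) => Aᶜ ⊆ Dset w) := by
              rw [Finset.card_filter]
              push_cast
              apply Finset.sum_congr rfl
              intro w _
              split <;> norm_num
          _ = bQ A := by rw [card_rev]; rfl


noncomputable def cnt (S T : Finset (Fin n)) : ℚ :=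
  #(Finset.univ.filter
    (fun w : Equiv.Perm (Fin (n+1)) => Cset ⇑w = Sᶜ ∧ Dset w = T))

lemma cardPartQ (S T : Finset (Fin n)) : mQ S T
    = ∑ S' : Finset (Fin n), ∑ T' : Finset (Fin n),
        if S' ⊆ S ∧ T' ⊆ T then cnt S' T' else 0 := by
  unfold mQ cnt
  rw [cardPart S T, Nat.cast_sum, Fintype.sum_prod_type]
  apply Finset.sum_congr rfl
  intro S' _
  apply Finset.sum_congr rfl
  intro T' _
  rw [Nat.cast_ite, Nat.cast_zero]


noncomputable def Zm (n : ℕ) : Matrix (Finset (Fin n)) (Finset (Fin n)) ℚ :=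
  Matrix.of fun S T => if T ⊆ S then 1 else 0
noncomputable def DMm (n : ℕ) : Matrix (Finset (Fin n)) (Finset (Fin n)) ℚ :=
  Matrix.diagonal (fun S : Finset (Fin n) => (-1:ℚ)^S.card)
noncomputable def Jm (n : ℕ) : Matrix (Finset (Fin n)) (Finset (Fin n)) ℚ :=
  Matrix.of fun S T => if T = Sᶜ then (1:ℚ) else 0
noncomputable def Em (n : ℕ) : Matrix (Finset (Fin n)) (Finset (Fin n)) ℚ :=
  Matrix.diagonal (fun S : Finset (Fin n) => eQ Sᶜ)
noncomputable def Cm (n : ℕ) : Matrix (Finset (Fin n)) (Finset (Fin n)) ℚ :=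
  Matrix.diagonal (fun B : Finset (Fin n) => (-1:ℚ)^(Bᶜ.card) / eQ B)

lemma card_compl_fin (S : Finset (Fin n)) : Sᶜ.card = n - S.card := by
  have := Finset.card_add_card_compl S
  simp only [Fintype.card_fin] at this
  omega

lemma neg_one_pow_compl (S : Finset (Fin n)) :
    (-1:ℚ)^S.card * (-1:ℚ)^(Sᶜ.card) = (-1:ℚ)^n := by
  rw [← pow_add]
  congr 1
  have := Finset.card_add_card_compl S
  simpa [Fintype.card_fin] using this

lemma ZDZ : Zm n * DMm n * Zm n = DMm n := by
  ext S U
  rw [Matrix.mul_apply]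
  simp only [Matrix.mul_diagonal, Zm, DMm, Matrix.of_apply]
  have hterm : ∀ T : Finset (Fin n),
      (if T ⊆ S then (1:ℚ) else 0) * (-1)^T.card * (if U ⊆ T then (1:ℚ) else 0)
        = if U ⊆ T ∧ T ⊆ S then (-1:ℚ)^T.card else 0 := by
    intro T
    by_cases h1 : T ⊆ S <;> by_cases h2 : U ⊆ T <;> simp [h1, h2]
  rw [Finset.sum_congr rfl (fun T _ => hterm T), ← Finset.sum_filter, altInterval,
    Matrix.diagonal_apply]
  by_cases h : S = U
  · subst h; simp
  · simp [h]

lemma ZDZT : Zm n * DMm n * (Zm n)ᵀ = Jm n * Zm n := by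
  ext S U
  rw [Matrix.mul_apply]
  simp only [Matrix.mul_diagonal, Zm, DMm, Matrix.of_apply, Matrix.transpose_apply]
  have hterm : ∀ T : Finset (Fin n),
      (if T ⊆ S then (1:ℚ) else 0) * (-1)^T.card * (if T ⊆ U then (1:ℚ) else 0)
        = if T ⊆ S ∩ U then (-1:ℚ)^T.card else 0 := by
    intro T
    by_cases h1 : T ⊆ S <;> by_cases h2 : T ⊆ U
    · rw [if_pos h1, if_pos h2, if_pos (Finset.subset_inter h1 h2)]; ring
    · rw [if_pos h1, if_neg h2,
        if_neg (fun h : T ⊆ S ∩ U => h2 (h.trans Finset.inter_subset_right))]; ring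
    · rw [if_neg h1,
        if_neg (fun h : T ⊆ S ∩ U => h1 (h.trans Finset.inter_subset_left))]; ring
    · rw [if_neg h1,
        if_neg (fun h : T ⊆ S ∩ U => h1 (h.trans Finset.inter_subset_left))]; ring
  rw [Finset.sum_congr rfl (fun T _ => hterm T), ← Finset.sum_filter]
  have hps : univ.filter (fun T : Finset (Fin n) => T ⊆ S ∩ U) = (S ∩ U).powerset := by
    ext T
    rw [Finset.mem_filter, Finset.mem_powerset]
    simp only [Finset.mem_univ, true_and]
  rw [hps, altPow]
  rw [Matrix.mul_apply]
  rw [Finset.sum_eq_single Sᶜ]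
  · simp only [Jm, Zm, Matrix.of_apply, if_pos rfl, one_mul]
    have : S ∩ U = ∅ ↔ U ⊆ Sᶜ := by
      constructor
      · intro h x hx
        rw [Finset.mem_compl]
        intro hxS
        have : x ∈ S ∩ U := Finset.mem_inter.mpr ⟨hxS, hx⟩
        rw [h] at this
        exact absurd this (Finset.notMem_empty x)
      · intro h
        ext x
        simp only [Finset.mem_inter, Finset.notMem_empty, iff_false]
        rintro ⟨h1, h2⟩
        exact (Finset.mem_compl.mp (h h2)) h1
    by_cases hc : S ∩ U = ∅
    · rw [if_pos hc, if_pos (this.mp hc)]; norm_num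
    · rw [if_neg hc, if_neg (fun hh => hc (this.mpr hh))]; norm_num
  · intro R _ hR
    simp only [Jm, Matrix.of_apply, if_neg hR, zero_mul]
  · intro h
    exact absurd (Finset.mem_univ Sᶜ) h

lemma ZTDZ : (Zm n)ᵀ * DMm n * Zm n = ((-1:ℚ)^n) • (Zm n * Jm n) := by
  ext S U
  rw [Matrix.mul_apply]
  simp only [Matrix.mul_diagonal, Zm, DMm, Matrix.of_apply, Matrix.transpose_apply]
  have hterm : ∀ T : Finset (Fin n),
      (if S ⊆ T then (1:ℚ) else 0) * (-1)^T.card * (if U ⊆ T then (1:ℚ) else 0)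
        = if S ∪ U ⊆ T then (-1:ℚ)^n * (-1:ℚ)^(Tᶜ.card) else 0 := by
    intro T
    have hp : (-1:ℚ)^T.card = (-1:ℚ)^n * (-1:ℚ)^(Tᶜ.card) := by
      have h1 := neg_one_pow_compl T
      have h2 : ((-1:ℚ)^(Tᶜ.card))*((-1:ℚ)^(Tᶜ.card)) = 1 := by
        rw [← mul_pow]; norm_num
      calc (-1:ℚ)^T.card = (-1:ℚ)^T.card * (((-1:ℚ)^(Tᶜ.card))*((-1:ℚ)^(Tᶜ.card))) := by
            rw [h2, mul_one]
        _ = ((-1:ℚ)^T.card * (-1:ℚ)^(Tᶜ.card)) * (-1:ℚ)^(Tᶜ.card) := by ring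
        _ = (-1:ℚ)^n * (-1:ℚ)^(Tᶜ.card) := by rw [h1]
    by_cases h1 : S ⊆ T <;> by_cases h2 : U ⊆ T <;>
      simp [h1, h2, Finset.union_subset_iff, hp]
  rw [Finset.sum_congr rfl (fun T _ => hterm T), ← Finset.sum_filter]
  rw [← Finset.mul_sum, altSup]
  rw [Matrix.smul_apply, Matrix.mul_apply]
  rw [Finset.sum_eq_single Uᶜ]
  · simp only [Zm, Jm, Matrix.of_apply, compl_compl, if_pos rfl, mul_one]
    have : S ∪ U = univ ↔ Uᶜ ⊆ S := by
      constructor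
      · intro h x hx
        have hxu : x ∈ S ∪ U := h ▸ mem_univ x
        rcases Finset.mem_union.mp hxu with h2 | h2
        · exact h2
        · exact absurd h2 (Finset.mem_compl.mp hx)
      · intro h
        apply Finset.eq_univ_of_forall
        intro x
        rw [Finset.mem_union]
        by_cases hx : x ∈ U
        · exact Or.inr hx
        · exact Or.inl (h (Finset.mem_compl.mpr hx))
    by_cases hc : S ∪ U = univ
    · rw [if_pos hc, if_pos (this.mp hc)]; norm_num
    · rw [if_neg hc, if_neg (fun hh => hc (this.mpr hh))]; norm_num
  · intro R _ hR
    have : ¬ (U = Rᶜ) := by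
      intro h
      apply hR
      rw [h, compl_compl]
    simp only [Zm, Jm, Matrix.of_apply, if_neg this, mul_zero]
  · intro h
    exact absurd (Finset.mem_univ Uᶜ) h

lemma EDJC : Em n * DMm n * Jm n * Cm n = Jm n := by
  have h1 : Em n * DMm n = Matrix.diagonal (fun S : Finset (Fin n) => eQ Sᶜ * (-1:ℚ)^S.card) := by
    rw [Em, DMm, Matrix.diagonal_mul_diagonal]
  rw [h1, Cm]
  ext S U
  rw [Matrix.mul_diagonal, Matrix.diagonal_mul]
  simp only [Jm, Matrix.of_apply]
  by_cases h : U = Sᶜ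
  · subst h
    rw [compl_compl]
    have hne := eQ_ne (Sᶜ : Finset (Fin n))
    have h2 : (-1:ℚ)^S.card * (-1:ℚ)^S.card = 1 := by rw [← mul_pow]; norm_num
    rw [if_pos (rfl : (Sᶜ : Finset (Fin n)) = Sᶜ)]
    calc eQ Sᶜ * (-1:ℚ)^S.card * 1 * ((-1:ℚ)^S.card / eQ Sᶜ)
        = (eQ Sᶜ / eQ Sᶜ) * ((-1:ℚ)^S.card * (-1:ℚ)^S.card) := by ring
      _ = 1 := by rw [div_self hne, h2, one_mul]
  · simp [h]

lemma csc' {A B : Finset (Fin n)} : Aᶜ ⊆ B ↔ Bᶜ ⊆ A := by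
  constructor <;>
  · intro h x hx
    by_contra hxA
    exact (Finset.mem_compl.mp hx) (h (Finset.mem_compl.mpr hxA))

lemma JCJE : Jm n * Cm n * Jm n * Em n = DMm n := by
  have h0 : Jm n * Cm n * Jm n = Matrix.of (fun S U : Finset (Fin n) =>
      if U = S then (-1:ℚ)^S.card / eQ Sᶜ else 0) := by
    ext S U
    rw [Matrix.mul_apply]
    simp only [Cm, Matrix.mul_diagonal, Jm, Matrix.of_apply]
    rw [Finset.sum_eq_single Sᶜ]
    · rw [if_pos rfl, one_mul, compl_compl]
      by_cases h : U = S
      · rw [if_pos h, if_pos h, mul_one]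
      · rw [if_neg h, if_neg h, mul_zero]
    · intro R _ hR
      rw [if_neg hR, zero_mul, zero_mul]
    · intro h
      exact absurd (Finset.mem_univ Sᶜ) h
  rw [h0, Em]
  ext S U
  rw [Matrix.mul_diagonal]
  simp only [Matrix.of_apply]
  by_cases h : U = S
  · subst h
    rw [if_pos rfl, div_mul_cancel₀ _ (eQ_ne _), DMm, Matrix.diagonal_apply, if_pos rfl]
  · rw [if_neg h, zero_mul, DMm, Matrix.diagonal_apply, if_neg (fun hh => h hh.symm)]

lemma JJ : Jm n * Jm n = 1 := by
  ext S U
  rw [Matrix.mul_apply]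
  simp only [Jm, Matrix.of_apply]
  rw [Finset.sum_eq_single Sᶜ]
  · rw [if_pos rfl, one_mul, compl_compl, Matrix.one_apply]
    by_cases h : U = S
    · rw [if_pos h, if_pos h.symm]
    · rw [if_neg h, if_neg (fun hh => h hh.symm)]
  · intro R _ hR
    rw [if_neg hR, zero_mul]
  · intro h
    exact absurd (Finset.mem_univ Sᶜ) h

lemma DD : DMm n * DMm n = 1 := by
  rw [DMm, Matrix.diagonal_mul_diagonal]
  ext S U
  rw [Matrix.diagonal_apply, Matrix.one_apply]
  by_cases h : S = U
  · rw [if_pos h, if_pos h, ← mul_pow]; norm_num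
  · rw [if_neg h, if_neg h]

lemma DJD : DMm n * Jm n * DMm n = ((-1:ℚ)^n) • Jm n := by
  ext S U
  rw [DMm, Matrix.mul_diagonal, Matrix.diagonal_mul, Matrix.smul_apply]
  simp only [Jm, Matrix.of_apply]
  by_cases h : U = Sᶜ
  · subst h
    rw [if_pos rfl, mul_one, neg_one_pow_compl, smul_eq_mul, mul_one]
  · rw [if_neg h, mul_zero, zero_mul, smul_eq_mul, mul_zero]

lemma DMT : (DMm n)ᵀ = DMm n := by
  rw [DMm, Matrix.diagonal_transpose]

lemma ZTDZT : (Zm n)ᵀ * DMm n * (Zm n)ᵀ = DMm n := by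
  have h := congrArg Matrix.transpose (ZDZ (n := n))
  rw [Matrix.transpose_mul, Matrix.transpose_mul, DMT, ← Matrix.mul_assoc] at h
  rw [h]

lemma ZJ : Zm n * Jm n = Matrix.of (fun S B : Finset (Fin n) => if Sᶜ ⊆ B then (1:ℚ) else 0) := by
  ext S B
  rw [Matrix.mul_apply]
  simp only [Zm, Jm, Matrix.of_apply]
  rw [Finset.sum_eq_single Bᶜ]
  · rw [if_pos (compl_compl B).symm, mul_one]
    by_cases h : Bᶜ ⊆ S
    · rw [if_pos h, if_pos (csc'.mp h)]
    · rw [if_neg h, if_neg (fun hh => h (csc'.mpr hh))]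
  · intro R _ hR
    have : ¬ (B = Rᶜ) := fun hh => hR (by rw [hh, compl_compl])
    rw [if_neg this, mul_zero]
  · intro h
    exact absurd (Finset.mem_univ Bᶜ) h

lemma C5div (A : Finset (Fin n)) :
    ∑ B ∈ univ.filter (fun B : Finset (Fin n) => A ⊆ B), (-1:ℚ)^(Bᶜ.card) / eQ B
      = 1 / eQ A := by
  have he : eQ (∅ : Finset (Fin n)) ≠ 0 := eQ_ne ∅
  have hbB : ∀ B : Finset (Fin n), bQ B = eQ (∅ : Finset (Fin n)) / eQ B := by
    intro B
    rw [eq_div_iff (eQ_ne B)]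
    exact bQ_mul B
  have h2 : ∑ B ∈ univ.filter (fun B : Finset (Fin n) => A ⊆ B),
      (-1:ℚ)^(Bᶜ.card) * (eQ (∅ : Finset (Fin n)) / eQ B) = eQ (∅ : Finset (Fin n)) / eQ A := by
    rw [← hbB A, ← C5count A]
    apply Finset.sum_congr rfl
    intro B _
    rw [hbB B]
  have h3 : (∑ B ∈ univ.filter (fun B : Finset (Fin n) => A ⊆ B),
      (-1:ℚ)^(Bᶜ.card) / eQ B) * eQ (∅ : Finset (Fin n))
        = (1 / eQ A) * eQ (∅ : Finset (Fin n)) := by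
    rw [Finset.sum_mul]
    calc ∑ B ∈ univ.filter (fun B : Finset (Fin n) => A ⊆ B),
          ((-1:ℚ)^(Bᶜ.card) / eQ B * eQ (∅ : Finset (Fin n)))
        = ∑ B ∈ univ.filter (fun B : Finset (Fin n) => A ⊆ B),
            (-1:ℚ)^(Bᶜ.card) * (eQ (∅ : Finset (Fin n)) / eQ B) := by
          apply Finset.sum_congr rfl
          intro B _
          ring
      _ = eQ (∅ : Finset (Fin n)) / eQ A := h2
      _ = (1 / eQ A) * eQ (∅ : Finset (Fin n)) := by ring
  exact mul_right_cancel₀ he h3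

lemma mQdiv (S T : Finset (Fin n)) : mQ S T = eQ Sᶜ / eQ (Sᶜ ∪ T) := by
  rw [eq_div_iff (eQ_ne _)]
  exact mQ_mul S T

lemma Mfact : (Matrix.of fun S T : Finset (Fin n) => mQ S T)
    = Em n * Zm n * Jm n * Cm n * Zm n := by
  have hassoc : Em n * Zm n * Jm n * Cm n * Zm n
      = Em n * ((Zm n * Jm n) * Cm n * Zm n) := by
    simp only [Matrix.mul_assoc]
  rw [hassoc, ZJ]
  ext S T
  rw [Em, Matrix.diagonal_mul, Matrix.mul_apply]
  simp only [Cm, Matrix.mul_diagonal, Matrix.of_apply, Zm]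
  have hterm : ∀ B : Finset (Fin n),
      (if Sᶜ ⊆ B then (1:ℚ) else 0) * ((-1:ℚ)^(Bᶜ.card) / eQ B) * (if T ⊆ B then (1:ℚ) else 0)
        = if Sᶜ ∪ T ⊆ B then (-1:ℚ)^(Bᶜ.card) / eQ B else 0 := by
    intro B
    by_cases h1 : Sᶜ ⊆ B <;> by_cases h2 : T ⊆ B
    · rw [if_pos h1, if_pos h2, if_pos (Finset.union_subset h1 h2)]; ring
    · rw [if_pos h1, if_neg h2,
        if_neg (fun h : Sᶜ ∪ T ⊆ B => h2 (Finset.union_subset_iff.mp h).2)]; ring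
    · rw [if_neg h1,
        if_neg (fun h : Sᶜ ∪ T ⊆ B => h1 (Finset.union_subset_iff.mp h).1)]; ring
    · rw [if_neg h1,
        if_neg (fun h : Sᶜ ∪ T ⊆ B => h1 (Finset.union_subset_iff.mp h).1)]; ring
  rw [Finset.sum_congr rfl (fun B _ => hterm B), ← Finset.sum_filter, C5div, mQdiv, mul_one_div]

lemma Gfact (G : Matrix (Finset (Fin n)) (Finset (Fin n)) ℚ)
    (hG : ∀ S T : Finset (Fin n), G S T = cnt S T) :
    (Matrix.of fun S T : Finset (Fin n) => mQ S T) = Zm n * G * (Zm n)ᵀ := by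
  ext S T
  rw [Matrix.of_apply, cardPartQ, Matrix.mul_apply]
  have hZG : ∀ T' : Finset (Fin n), (Zm n * G) S T'
      = ∑ S' : Finset (Fin n), (if S' ⊆ S then (1:ℚ) else 0) * G S' T' := by
    intro T'
    rw [Matrix.mul_apply]
    apply Finset.sum_congr rfl
    intro S' _
    rw [Zm, Matrix.of_apply]
  calc ∑ S' : Finset (Fin n), ∑ T' : Finset (Fin n),
        (if S' ⊆ S ∧ T' ⊆ T then cnt S' T' else 0)
      = ∑ T' : Finset (Fin n), ∑ S' : Finset (Fin n),
          ((if S' ⊆ S then (1:ℚ) else 0) * G S' T') * (if T' ⊆ T then (1:ℚ) else 0) := by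
        rw [Finset.sum_comm]
        apply Finset.sum_congr rfl
        intro T' _
        apply Finset.sum_congr rfl
        intro S' _
        rw [hG S' T']
        by_cases h1 : S' ⊆ S <;> by_cases h2 : T' ⊆ T <;> simp [h1, h2]
    _ = ∑ T' : Finset (Fin n), (Zm n * G) S T' * (Zm n)ᵀ T' T := by
        apply Finset.sum_congr rfl
        intro T' _
        rw [hZG T', Finset.sum_mul, Matrix.transpose_apply, Zm, Matrix.of_apply]
    _ = ∑ T' : Finset (Fin n), (Zm n * G) S T' * (Zm n)ᵀ T' T := rfl

lemma Gsolve (G : Matrix (Finset (Fin n)) (Finset (Fin n)) ℚ)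
    (h : Zm n * G * (Zm n)ᵀ = Em n * Zm n * Jm n * Cm n * Zm n) :
    G = DMm n * Zm n * DMm n * (Em n * Zm n * Jm n * Cm n * Zm n)
        * (DMm n * (Zm n)ᵀ * DMm n) := by
  rw [← h]
  have hcalc : DMm n * Zm n * DMm n * (Zm n * G * (Zm n)ᵀ) * (DMm n * (Zm n)ᵀ * DMm n) = G := by
    calc DMm n * Zm n * DMm n * (Zm n * G * (Zm n)ᵀ) * (DMm n * (Zm n)ᵀ * DMm n)
        = DMm n * ((Zm n * DMm n * Zm n) * G * ((Zm n)ᵀ * DMm n * (Zm n)ᵀ)) * DMm n := by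
          simp only [Matrix.mul_assoc]
      _ = DMm n * (DMm n * G * DMm n) * DMm n := by rw [ZDZ, ZTDZT]
      _ = (DMm n * DMm n) * G * (DMm n * DMm n) := by simp only [Matrix.mul_assoc]
      _ = G := by rw [DD, Matrix.one_mul, Matrix.mul_one]
  exact hcalc.symm

lemma invol (G : Matrix (Finset (Fin n)) (Finset (Fin n)) ℚ)
    (hfact : G = DMm n * Zm n * DMm n * (Em n * Zm n * Jm n * Cm n * Zm n)
        * (DMm n * (Zm n)ᵀ * DMm n)) :
    G * (DMm n * G * DMm n) = 1 := by
  have c1 : ∀ X : Matrix (Finset (Fin n)) (Finset (Fin n)) ℚ,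
      Zm n * (DMm n * (Zm n * X)) = DMm n * X := by
    intro X
    rw [← Matrix.mul_assoc, ← Matrix.mul_assoc, ZDZ]
  have c2 : ∀ X : Matrix (Finset (Fin n)) (Finset (Fin n)) ℚ,
      Zm n * (DMm n * ((Zm n)ᵀ * X)) = Jm n * (Zm n * X) := by
    intro X
    rw [← Matrix.mul_assoc, ← Matrix.mul_assoc, ZDZT, Matrix.mul_assoc]
  have c6 : ∀ X : Matrix (Finset (Fin n)) (Finset (Fin n)) ℚ,
      Jm n * (Jm n * X) = X := by
    intro X
    rw [← Matrix.mul_assoc, JJ, Matrix.one_mul]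
  have c7 : ∀ X : Matrix (Finset (Fin n)) (Finset (Fin n)) ℚ,
      DMm n * (DMm n * X) = X := by
    intro X
    rw [← Matrix.mul_assoc, DD, Matrix.one_mul]
  have c8 : ∀ X : Matrix (Finset (Fin n)) (Finset (Fin n)) ℚ,
      Jm n * (DMm n * X) = ((-1:ℚ)^n) • (DMm n * (Jm n * X)) := by
    intro X
    have h2 : Jm n * DMm n = ((-1:ℚ)^n) • (DMm n * Jm n) := by
      calc Jm n * DMm n = (DMm n * DMm n) * (Jm n * DMm n) := by rw [DD, Matrix.one_mul]
        _ = DMm n * (DMm n * Jm n * DMm n) := by simp only [Matrix.mul_assoc]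
        _ = DMm n * (((-1:ℚ)^n) • Jm n) := by rw [DJD]
        _ = ((-1:ℚ)^n) • (DMm n * Jm n) := by rw [Matrix.mul_smul]
    rw [← Matrix.mul_assoc, h2, Matrix.smul_mul, Matrix.mul_assoc]
  have hs1 : ((-1:ℚ)^n) * ((-1:ℚ)^n) = 1 := by rw [← mul_pow]; norm_num
  have c38 : ∀ X : Matrix (Finset (Fin n)) (Finset (Fin n)) ℚ,
      (Zm n)ᵀ * (DMm n * (Zm n * (DMm n * X))) = Zm n * (DMm n * (Jm n * X)) := by
    intro X
    calc (Zm n)ᵀ * (DMm n * (Zm n * (DMm n * X)))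
        = ((Zm n)ᵀ * DMm n * Zm n) * (DMm n * X) := by simp only [Matrix.mul_assoc]
      _ = (((-1:ℚ)^n) • (Zm n * Jm n)) * (DMm n * X) := by rw [ZTDZ]
      _ = ((-1:ℚ)^n) • (Zm n * (Jm n * (DMm n * X))) := by
          rw [Matrix.smul_mul]
          simp only [Matrix.mul_assoc]
      _ = ((-1:ℚ)^n) • (Zm n * (((-1:ℚ)^n) • (DMm n * (Jm n * X)))) := by rw [c8]
      _ = (((-1:ℚ)^n) * ((-1:ℚ)^n)) • (Zm n * (DMm n * (Jm n * X))) := by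
          rw [Matrix.mul_smul, smul_smul]
      _ = Zm n * (DMm n * (Jm n * X)) := by rw [hs1, one_smul]
  have c5 : ∀ X : Matrix (Finset (Fin n)) (Finset (Fin n)) ℚ,
      Cm n * (Jm n * (Em n * X)) = Jm n * (DMm n * X) := by
    intro X
    have h : Jm n * (Cm n * (Jm n * (Em n * X))) = DMm n * X := by
      calc Jm n * (Cm n * (Jm n * (Em n * X)))
          = (Jm n * Cm n * Jm n * Em n) * X := by simp only [Matrix.mul_assoc]
        _ = DMm n * X := by rw [JCJE]
    calc Cm n * (Jm n * (Em n * X))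
        = Jm n * (Jm n * (Cm n * (Jm n * (Em n * X)))) := (c6 _).symm
      _ = Jm n * (DMm n * X) := by rw [h]
  have c4 : ∀ X : Matrix (Finset (Fin n)) (Finset (Fin n)) ℚ,
      Em n * (DMm n * (Jm n * (Cm n * X))) = Jm n * X := by
    intro X
    calc Em n * (DMm n * (Jm n * (Cm n * X)))
        = (Em n * DMm n * Jm n * Cm n) * X := by simp only [Matrix.mul_assoc]
      _ = Jm n * X := by rw [EDJC]
  have main : ∀ X : Matrix (Finset (Fin n)) (Finset (Fin n)) ℚ,
      G * (DMm n * (G * (DMm n * X))) = X := by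
    intro X
    rw [hfact]
    simp only [Matrix.mul_assoc]
    rw [c7, c7, c38, c1, c7, c5, c6, c1, c4, c2, c6, c1, c7]
  have h := main 1
  rw [Matrix.mul_one] at h
  calc G * (DMm n * G * DMm n) = G * (DMm n * (G * DMm n)) := by simp only [Matrix.mul_assoc]
    _ = 1 := h


end Stmt9

open Stmt9 in
/-- The matrix `Γ` with `Γ_{ST} = #{w : C(w) = [n-1]\S, D(w) = T}` is invertible over `ℚ`
with `(Γ⁻¹)_{ST} = (-1)^{|S|+|T|} Γ_{ST}`. -/
theorem stmt9 (n : ℕ)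
    (G : Matrix (Finset (Fin n)) (Finset (Fin n)) ℚ)
    (hG : ∀ S T, G S T = (Finset.univ.filter
        (fun w : Equiv.Perm (Fin (n+1)) => Cset ⇑w = Sᶜ ∧ Dset w = T)).card)
    (G' : Matrix (Finset (Fin n)) (Finset (Fin n)) ℚ)
    (hG' : ∀ S T, G' S T = (-1) ^ (S.card + T.card) * G S T) :
    G * G' = 1 ∧ G' * G = 1 := by
  have hGc : ∀ S T : Finset (Fin n), G S T = cnt S T := by
    intro S T
    rw [hG S T]
    rfl
  have h1 := Gfact G hGc
  have h2 := Mfact (n := n)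
  have hfac := Gsolve G (h1.symm.trans h2)
  have hG'eq : G' = DMm n * G * DMm n := by
    ext S T
    rw [hG' S T, DMm, Matrix.mul_diagonal, Matrix.diagonal_mul, pow_add]
    ring
  have hmain : G * (DMm n * G * DMm n) = 1 := invol G hfac
  rw [hG'eq]
  exact ⟨hmain, mul_eq_one_comm.mp hmain⟩
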